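/- Let 0 < s < 1, 0 < p ≤ 1/(2s), q ≥ 1 with q − 3/2 ≤ s(p+q−1), and define for x < 0 the boundary value f(x−i0) = −(s/B(p,q)) |x|^{ps−1} e^{−iπps} (1 − |x|ˢ e^{−iπs})^{q−1} (principal powers). Then Re f(x−i0) ≤ 0 for every x < 0. -/

import Mathlib

open Complex Real

set_option maxHeartbeats 1000000 in
/-- Boundary value of the analytically continued density of a power of a beta
random variable on the negative half-line: if `0 < s < 1`, `0 < p ≤ 1/(2s)`,
`q ≥ 1`, `q - 3/2 ≤ s(p+q-1)`, then for `x < 0`,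
`f(x - i0) = -(s/B(p,q)) |x|^{ps-1} e^{-iπps} (1 - |x|ˢ e^{-iπs})^{q-1}`
has nonpositive real part. -/
theorem beta_power_boundary_re_nonpos (s p q : ℝ) (hs0 : 0 < s) (hs1 : s < 1)
    (hp0 : 0 < p) (hp : p ≤ 1 / (2 * s)) (hq : 1 ≤ q)
    (hq2 : q - 3 / 2 ≤ s * (p + q - 1))
    (B : ℝ) (hB : B = Real.Gamma p * Real.Gamma q / Real.Gamma (p + q))
    (x : ℝ) (hx : x < 0) :
    (-(s / B : ℂ) * (|x| : ℝ) ^ ((p * s - 1 : ℝ) : ℂ) *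
        Complex.exp (-(Real.pi * p * s) * Complex.I) *
        (1 - ((|x| : ℝ) ^ (s : ℝ) : ℝ) * Complex.exp (-(Real.pi * s) * Complex.I))
          ^ ((q - 1 : ℝ) : ℂ)).re ≤ 0 := by
  have hr : 0 < |x| := abs_pos.mpr hx.ne
  have hq0 : 0 < q := lt_of_lt_of_le one_pos hq
  have hB0 : 0 < B := by
    rw [hB]
    exact div_pos (mul_pos (Real.Gamma_pos_of_pos hp0) (Real.Gamma_pos_of_pos hq0))
      (Real.Gamma_pos_of_pos (by linarith))
  have hpi := Real.pi_pos
  have hps : p * s ≤ 1 / 2 := by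
    have h2s : (0:ℝ) < 2 * s := by linarith
    have := (le_div_iff₀ h2s).mp hp
    nlinarith
  set t : ℝ := |x| ^ s with ht_def
  have ht : 0 < t := Real.rpow_pos_of_pos hr s
  set c : ℝ := Real.cos (Real.pi * s) with hc_def
  have hsin : 0 < Real.sin (Real.pi * s) :=
    Real.sin_pos_of_pos_of_lt_pi (by positivity) (by nlinarith)
  have hc2 : c ^ 2 < 1 := by
    nlinarith [Real.sin_sq_add_cos_sq (Real.pi * s)]
  set w : ℂ := 1 - (t : ℂ) * Complex.exp (-(Real.pi * s) * Complex.I) with hw_def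
  have he1 : (-(Real.pi * s) * Complex.I : ℂ) = ((-(Real.pi * s) : ℝ) : ℂ) * Complex.I := by
    push_cast; ring
  have hwre : w.re = 1 - t * c := by
    rw [hw_def, he1]
    simp only [Complex.sub_re, Complex.one_re, Complex.mul_re, Complex.ofReal_re,
      Complex.ofReal_im, Complex.exp_ofReal_mul_I_re, Complex.exp_ofReal_mul_I_im,
      Real.cos_neg, Real.sin_neg, hc_def]
    ring
  have hwim : w.im = t * Real.sin (Real.pi * s) := by
    rw [hw_def, he1]
    simp only [Complex.sub_im, Complex.one_im, Complex.mul_im, Complex.ofReal_re,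
      Complex.ofReal_im, Complex.exp_ofReal_mul_I_re, Complex.exp_ofReal_mul_I_im,
      Real.cos_neg, Real.sin_neg]
    ring
  have hwim0 : 0 < w.im := by rw [hwim]; positivity
  have hw0 : w ≠ 0 := by
    intro h
    rw [h] at hwim0
    simp at hwim0
  set A : ℝ := ‖w‖ with hA_def
  have hA0 : 0 < A := norm_pos_iff.mpr hw0
  have hA2 : A ^ 2 = 1 - 2 * t * c + t ^ 2 := by
    rw [hA_def, Complex.sq_norm, Complex.normSq_apply, hwre, hwim]
    nlinarith [Real.sin_sq_add_cos_sq (Real.pi * s)]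
  -- key inequality : 0 ≤ 1 - t*c + c*A
  have hPQ : (1 - t * c + c * A) * (1 - t * c - c * A) = (1 - c ^ 2) * (1 - 2 * t * c) := by
    linear_combination (-(c ^ 2)) * hA2
  have hP : 0 ≤ 1 - t * c + c * A := by
    rcases le_or_gt (2 * t * c) 1 with h | h
    · -- P * Q = (1-2tc)(1-c²) ≥ 0, P + Q = 2(1-tc) ≥ 1 > 0
      by_contra hcon
      push_neg at hcon
      have hQ : 0 < 1 - t * c - c * A := by linarith
      nlinarith [hPQ, mul_neg_of_neg_of_pos (show 1 - t * c + c * A < 0 by linarith) hQ]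
    · -- c > 0 here and t*c > 1/2
      have hc0 : 0 < c := by nlinarith
      rcases le_or_gt (t * c) 1 with h1 | h1
      · nlinarith [mul_nonneg hc0.le hA0.le]
      · by_contra hcon
        push_neg at hcon
        have hQ : 1 - t * c - c * A < 0 := by nlinarith [mul_nonneg hc0.le hA0.le]
        nlinarith [hPQ, mul_pos_of_neg_of_neg hcon hQ]
  have harg0 : 0 ≤ Complex.arg w := Complex.arg_nonneg_iff.mpr hwim0.le
  have harg_le : Complex.arg w ≤ Real.pi - Real.pi * s := by
    by_contra hcon
    push_neg at hcon
    have hmem1 : Complex.arg w ∈ Set.Icc 0 Real.pi := ⟨harg0, Complex.arg_le_pi w⟩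
    have hmem2 : Real.pi - Real.pi * s ∈ Set.Icc 0 Real.pi := by
      constructor <;> nlinarith
    have h1 : Real.cos (Complex.arg w) < Real.cos (Real.pi - Real.pi * s) :=
      Real.strictAntiOn_cos hmem2 hmem1 hcon
    rw [Real.cos_pi_sub, Complex.cos_arg hw0, hwre, ← hc_def, ← hA_def] at h1
    rw [div_lt_iff₀ hA0] at h1
    nlinarith
  set θ : ℝ := -(Real.pi * p * s) + (q - 1) * Complex.arg w with hθ_def
  have hθlb : -(Real.pi / 2) ≤ θ := by
    have h1 : 0 ≤ (q - 1) * Complex.arg w := mul_nonneg (by linarith) harg0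
    rw [hθ_def]
    nlinarith
  have hθub : θ ≤ Real.pi / 2 := by
    have h1 : (q - 1) * Complex.arg w ≤ (q - 1) * (Real.pi - Real.pi * s) :=
      mul_le_mul_of_nonneg_left harg_le (by linarith)
    have h2 : Real.pi * (q - 3 / 2) ≤ Real.pi * (s * (p + q - 1)) :=
      mul_le_mul_of_nonneg_left hq2 hpi.le
    rw [hθ_def]
    nlinarith
  have hcos : 0 ≤ Real.cos θ := Real.cos_nonneg_of_mem_Icc ⟨hθlb, hθub⟩
  -- now rewrite the expression
  set D : ℝ := Real.exp ((q - 1) * Real.log A) with hD_def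
  have hcpow : w ^ ((q - 1 : ℝ) : ℂ) =
      (D : ℂ) * Complex.exp (((q - 1) * Complex.arg w : ℝ) * Complex.I) := by
    rw [Complex.cpow_def_of_ne_zero hw0, Complex.log, hD_def, hA_def,
      Complex.ofReal_exp, ← Complex.exp_add]
    congr 1
    push_cast
    ring
  have hR : ((|x| : ℝ) : ℂ) ^ ((p * s - 1 : ℝ) : ℂ) = ((|x| ^ (p * s - 1) : ℝ) : ℂ) :=
    (Complex.ofReal_cpow hr.le _).symm
  set R : ℝ := |x| ^ (p * s - 1) with hR_def
  have hRpos : 0 < R := Real.rpow_pos_of_pos hr _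
  have heq : (-(s / B : ℂ) * (|x| : ℝ) ^ ((p * s - 1 : ℝ) : ℂ) *
        Complex.exp (-(Real.pi * p * s) * Complex.I) *
        (1 - ((|x| : ℝ) ^ (s : ℝ) : ℝ) * Complex.exp (-(Real.pi * s) * Complex.I))
          ^ ((q - 1 : ℝ) : ℂ)) =
      ((-(s / B * R * D) : ℝ) : ℂ) * Complex.exp ((θ : ℝ) * Complex.I) := by
    rw [← hw_def, hcpow, hR]
    have e1 : Complex.exp (-(Real.pi * p * s) * Complex.I) *
        Complex.exp (((q - 1) * Complex.arg w : ℝ) * Complex.I) =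
        Complex.exp ((θ : ℝ) * Complex.I) := by
      rw [← Complex.exp_add]
      congr 1
      rw [hθ_def]
      push_cast
      ring
    calc -(↑s / ↑B) * (R : ℂ) * Complex.exp (-(Real.pi * p * s) * Complex.I) *
          ((D : ℂ) * Complex.exp (((q - 1) * Complex.arg w : ℝ) * Complex.I))
        = ((-(s / B * R * D) : ℝ) : ℂ) *
            (Complex.exp (-(Real.pi * p * s) * Complex.I) *
              Complex.exp (((q - 1) * Complex.arg w : ℝ) * Complex.I)) := by
          push_cast; ring
      _ = ((-(s / B * R * D) : ℝ) : ℂ) * Complex.exp ((θ : ℝ) * Complex.I) := by rw [e1]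
  rw [heq]
  rw [Complex.re_ofReal_mul, Complex.exp_ofReal_mul_I_re]
  have hD0 : 0 < D := Real.exp_pos _
  have hC : 0 ≤ s / B * R * D * Real.cos θ := by positivity
  nlinarith
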